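/- Let G be a group with trivial center, φ an automorphism of G, m a positive integer minimal with the property that φ^m is inner, and p ∈ G an element with φ^m = (conjugation by p). Then the kernel of the group homomorphism Φ : G ⋊_φ ℤ → Aut(G), Φ(g, n) = (conjugation by g) ∘ φⁿ, is the cyclic subgroup generated by the element (p⁻¹, m). -/

import Mathlib

/-- The map `Φ : G ⋊_φ ℤ → Aut(G)`, `Φ(g, n) = (conjugation by g) ∘ φⁿ`, where the
semidirect product `G ⋊_φ ℤ` is realized with `Multiplicative ℤ` acting on `G` via
integer powers of `φ`. -/
def twistedPhi {G : Type*} [Group G] (φ : MulAut G) :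
    (G ⋊[zpowersHom (MulAut G) φ] Multiplicative ℤ) → MulAut G :=
  fun r => MulAut.conj r.left * φ ^ Multiplicative.toAdd r.right

/-- Let `G` have trivial center, let `m > 0` be minimal with `φ^m` inner, and let
`p ∈ G` satisfy `φ^m = conj p`. Then the kernel of `Φ : G ⋊_φ ℤ → Aut(G)`,
`Φ(g, n) = (conjugation by g) ∘ φⁿ`, is the cyclic subgroup generated by `(p⁻¹, m)`. -/
theorem twistedPhi_kernel {G : Type*} [Group G]
    (hZ : Subgroup.center G = ⊥) (φ : MulAut G)
    (m : ℕ) (hm : 0 < m) (p : G)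
    (hp : ∀ x : G, (φ ^ m) x = p * x * p⁻¹)
    (hmin : ∀ k : ℕ, 0 < k → k < m → ¬ ∃ a : G, ∀ x : G, (φ ^ k) x = a * x * a⁻¹) :
    {r : G ⋊[zpowersHom (MulAut G) φ] Multiplicative ℤ | twistedPhi φ r = 1} =
      (Subgroup.zpowers
        (⟨p⁻¹, Multiplicative.ofAdd (m : ℤ)⟩ :
          G ⋊[zpowersHom (MulAut G) φ] Multiplicative ℤ) : Set _) := by
  -- trivial center: conjugation determines the element
  have key : ∀ a b : G, (∀ x, a * x * a⁻¹ = b * x * b⁻¹) → a = b := by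
    intro a b h
    have hc : b⁻¹ * a ∈ Subgroup.center G := Subgroup.mem_center_iff.mpr (by
      intro x
      have h' := h x
      calc x * (b⁻¹ * a) = b⁻¹ * (b * x * b⁻¹) * a := by group
        _ = b⁻¹ * (a * x * a⁻¹) * a := by rw [h']
        _ = b⁻¹ * a * x := by group)
    rw [hZ, Subgroup.mem_bot] at hc
    exact (inv_mul_eq_one.mp hc).symm
  -- φ fixes p
  have hφp : φ p = p := by
    refine (key p (φ p) ?_).symm
    intro y
    obtain ⟨x, rfl⟩ := φ.surjective y
    have h1 : (φ ^ m) (φ x) = φ ((φ ^ m) x) := by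
      rw [← MulAut.mul_apply, ← MulAut.mul_apply, ← pow_succ, ← pow_succ']
    rw [hp, hp] at h1
    rw [h1, map_mul, map_mul, map_inv]
  have hφinvp : φ⁻¹ p = p := by
    conv_lhs => rw [← hφp]
    exact φ.symm_apply_apply p
  have hpfix : ∀ n : ℤ, (φ ^ n) p = p := by
    intro n
    induction n using Int.induction_on with
    | zero => rfl
    | succ k ih => rw [zpow_add_one, MulAut.mul_apply, hφp, ih]
    | pred k ih => rw [zpow_sub_one, MulAut.mul_apply, show φ⁻¹ p = p from hφinvp, ih]
  have hpfixinv : ∀ n : ℤ, (φ ^ n) p⁻¹ = p⁻¹ := fun n => by rw [map_inv, hpfix]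
  -- φ^m = conj p as automorphisms
  have hpm : φ ^ (m : ℤ) = MulAut.conj p := by
    ext x
    rw [zpow_natCast]
    rw [hp x, MulAut.conj_apply]
  set z : G ⋊[zpowersHom (MulAut G) φ] Multiplicative ℤ :=
    ⟨p⁻¹, Multiplicative.ofAdd (m : ℤ)⟩ with hz
  have hzq : ∀ q : ℤ, z ^ q =
      (⟨(p⁻¹) ^ q, Multiplicative.ofAdd (q * m)⟩ :
        G ⋊[zpowersHom (MulAut G) φ] Multiplicative ℤ) := by
    intro q
    induction q using Int.induction_on with
    | zero => ext <;> simp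
    | succ k ih =>
        rw [zpow_add_one, ih]
        ext
        · rw [SemidirectProduct.mul_left]
          show (p⁻¹) ^ (k:ℤ) * (φ ^ (Multiplicative.ofAdd ((k:ℤ) * m)).toAdd) p⁻¹ = _
          rw [toAdd_ofAdd, hpfixinv, ← zpow_add_one]
        · rw [SemidirectProduct.mul_right]
          show Multiplicative.ofAdd ((k:ℤ)*m) * Multiplicative.ofAdd (m:ℤ) = _
          rw [← ofAdd_add]
          ring_nf
          rfl
    | pred k ih =>
        rw [zpow_sub_one, ih]
        have hzinvl : z⁻¹.left = p := by
          rw [SemidirectProduct.inv_left]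
          show (φ ^ (Multiplicative.ofAdd ((m:ℤ)))⁻¹.toAdd) (p⁻¹)⁻¹ = p
          rw [inv_inv, toAdd_inv, toAdd_ofAdd]
          exact hpfix _
        have hzinvr : z⁻¹.right = Multiplicative.ofAdd (-(m:ℤ)) := rfl
        ext
        · rw [SemidirectProduct.mul_left, hzinvl]
          show (p⁻¹) ^ (-(k:ℤ)) * (φ ^ (Multiplicative.ofAdd ((-(k:ℤ)) * m)).toAdd) p
              = (p⁻¹) ^ (-(k:ℤ) - 1)
          rw [toAdd_ofAdd, hpfix, zpow_sub_one, inv_inv]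
        · rw [SemidirectProduct.mul_right, hzinvr]
          show Multiplicative.ofAdd ((-(k:ℤ))*m) * Multiplicative.ofAdd (-(m:ℤ)) = _
          rw [← ofAdd_add]
          ring_nf
          rfl
  ext r
  simp only [Set.mem_setOf_eq, SetLike.mem_coe, Subgroup.mem_zpowers_iff]
  constructor
  · intro hr
    simp only [twistedPhi] at hr
    set n : ℤ := Multiplicative.toAdd r.right with hn
    have hφn : φ ^ n = MulAut.conj r.left⁻¹ := by
      have := congrArg (fun f => (MulAut.conj r.left)⁻¹ * f) hr
      simp only [inv_mul_cancel_left, mul_one] at this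
      rw [this, ← map_inv]
    set q : ℤ := n / m with hq
    set s : ℤ := n % m with hs
    have hsq : (m : ℤ) * q + s = n := Int.mul_ediv_add_emod n m
    have hs0 : 0 ≤ s := Int.emod_nonneg n (by exact_mod_cast hm.ne')
    have hsm : s < m := Int.emod_lt_of_pos n (by exact_mod_cast hm)
    have hφs : φ ^ s = MulAut.conj (r.left⁻¹ * (p ^ q)⁻¹) := by
      have : φ ^ s = φ ^ n * (φ ^ ((m:ℤ) * q))⁻¹ := by
        rw [← zpow_neg, ← zpow_add]
        congr 1
        omega
      rw [this, hφn, zpow_mul, hpm, ← map_zpow, ← map_inv, ← map_mul]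
    have hse : s = 0 := by
      by_contra hne
      refine hmin s.toNat (by omega) (by omega) ⟨r.left⁻¹ * (p ^ q)⁻¹, ?_⟩
      intro x
      have : φ ^ (s.toNat : ℤ) = MulAut.conj (r.left⁻¹ * (p ^ q)⁻¹) := by
        rw [Int.toNat_of_nonneg hs0]; exact hφs
      rw [← zpow_natCast φ s.toNat, this, MulAut.conj_apply]
    have hnmq : n = (m : ℤ) * q := by omega
    have hleft : r.left = (p⁻¹) ^ q := by
      have h1 : MulAut.conj r.left⁻¹ = MulAut.conj (p ^ q) := by
        rw [← hφn, hnmq, zpow_mul, hpm, ← map_zpow]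
      have h2 : r.left⁻¹ = p ^ q := by
        apply key
        intro x
        have := congrArg (fun f : MulAut G => f x) h1
        simp only [MulAut.conj_apply] at this
        exact this
      rw [inv_zpow, ← h2, inv_inv]
    refine ⟨q, ?_⟩
    rw [hzq q]
    ext
    · exact hleft.symm
    · show Multiplicative.ofAdd (q * m) = r.right
      have : r.right = Multiplicative.ofAdd n := (ofAdd_toAdd r.right).symm
      rw [this, hnmq]
      ring_nf
  · rintro ⟨q, rfl⟩
    rw [hzq q]
    simp only [twistedPhi]
    show MulAut.conj ((p⁻¹) ^ q) * φ ^ (Multiplicative.ofAdd (q * m)).toAdd = 1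
    rw [toAdd_ofAdd, mul_comm q (m:ℤ), zpow_mul, hpm, inv_zpow, map_inv, map_zpow,
      inv_mul_cancel]
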